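/- For positive integers p, q: ∑_{1 ≤ k_1 < ⋯ < k_p} [k_1 k_2 ⋯ k_p]^{−1} k_p^{−q} = ∑_{1 ≤ ℓ_1 < ⋯ < ℓ_q} [ℓ_1 ℓ_2 ⋯ ℓ_q]^{−1} ℓ_q^{−p}, i.e. the Drinfel'd duality ζ({1}^{p−1}, q+1) = ζ({1}^{q−1}, p+1) in series form. -/

import Mathlib

open Filter Topology Nat
open scoped ENNReal NNReal

namespace DD

noncomputable def wr (m n : ℕ) : ℝ := (m ! : ℝ) * (n ! : ℝ) / ((m + n + 1)! : ℝ)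

lemma wr_nonneg (m n : ℕ) : 0 ≤ wr m n := by unfold wr; positivity

lemma hasSum_telescope {f d : ℕ → ℝ} (hfd : ∀ i, f i = d i - d (i + 1))
    (hf : ∀ i, 0 ≤ f i) (hd : ∀ i, 0 ≤ d i) (h0 : Tendsto d atTop (𝓝 0)) :
    HasSum f (d 0) := by
  have hps : ∀ n, ∑ i ∈ Finset.range n, f i = d 0 - d n := by
    intro n
    rw [show (∑ i ∈ Finset.range n, f i) = ∑ i ∈ Finset.range n, (d i - d (i+1)) from
      Finset.sum_congr rfl fun i _ => hfd i, Finset.sum_range_sub' d n]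
  have htend : Tendsto (fun n => ∑ i ∈ Finset.range n, f i) atTop (𝓝 (d 0)) := by
    simp only [hps]
    simpa using tendsto_const_nhds.sub h0
  have hsummable : Summable f := by
    apply summable_of_sum_range_le hf
    intro n; rw [hps n]; linarith [hd n]
  exact (hsummable.hasSum_iff_tendsto_nat).2 htend

lemma fact_fact_le (a b : ℕ) : (a ! : ℝ) * (b ! : ℝ) ≤ ((a + b)! : ℝ) := by
  have h := Nat.factorial_mul_factorial_dvd_factorial_add a b
  exact_mod_cast Nat.cast_le.2 (Nat.le_of_dvd (Nat.factorial_pos _) h)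

lemma wr_le (m n : ℕ) : wr m n ≤ 1 / (n + 1 : ℝ) := by
  unfold wr
  rw [div_le_div_iff₀ (by positivity) (by positivity)]
  have h1 : (m ! : ℝ) * ((n+1)! : ℝ) ≤ ((m + n + 1)! : ℝ) := by
    have := fact_fact_le m (n+1)
    rwa [show m + (n+1) = m + n + 1 from by omega] at this
  have h2 : ((n+1)! : ℝ) = ((n:ℝ)+1) * (n !) := by
    rw [Nat.factorial_succ]; push_cast; ring
  nlinarith [h1]

lemma tendsto_wr (m : ℕ) : Tendsto (fun n => wr m n) atTop (𝓝 0) := by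
  have h1 : Tendsto (fun n : ℕ => 1 / (n + 1 : ℝ)) atTop (𝓝 0) := by
    simpa using tendsto_one_div_add_atTop_nhds_zero_nat (𝕜 := ℝ)
  exact squeeze_zero (fun n => wr_nonneg m n) (fun n => wr_le m n) h1

lemma wr_symm (m n : ℕ) : wr m n = wr n m := by
  unfold wr; rw [show n + m + 1 = m + n + 1 from by omega]; ring

noncomputable def eps (m n : ℕ) : ℝ := (m ! : ℝ) * (n ! : ℝ) / ((m + n + 2)! : ℝ)

lemma eps_nonneg (m n : ℕ) : 0 ≤ eps m n := by unfold eps; positivity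

lemma eps_symm (m n : ℕ) : eps m n = eps n m := by
  unfold eps; rw [show n + m + 2 = m + n + 2 from by omega]; ring

lemma eps_eq1 (m n : ℕ) : eps m n = wr m (n + 1) / ((n : ℝ) + 1) := by
  unfold eps wr
  rw [show m + (n + 1) + 1 = m + n + 2 from by omega,
    show (m + n + 2) = (m + n + 1) + 1 from by omega,
    Nat.factorial_succ (m + n + 1), Nat.factorial_succ n]
  have h1 : ((m + n + 1)! : ℝ) ≠ 0 := by positivity
  push_cast
  field_simp

lemma scalar1 (m n : ℕ) :
    wr m (n + 1) / ((n : ℝ) + 1) = (wr m n - wr m (n + 1)) / ((m : ℝ) + 1) := by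
  unfold wr
  rw [show m + (n + 1) + 1 = (m + n + 1) + 1 from by omega,
    Nat.factorial_succ (m + n + 1), Nat.factorial_succ n]
  have h1 : ((m + n + 1)! : ℝ) ≠ 0 := by positivity
  push_cast
  field_simp
  ring

lemma scalar1' (m n : ℕ) :
    eps m n = (wr m n - wr (m + 1) n) / ((n : ℝ) + 1) := by
  rw [eps_symm, eps_eq1 n m, scalar1 n m, wr_symm n m, wr_symm n (m+1)]

lemma scalar4 (m n : ℕ) :
    wr m n / ((m : ℝ) + 1) = eps m n + wr m (n + 1) / ((m : ℝ) + 1) := by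
  rw [eps_eq1, scalar1 m n, sub_div]
  ring

/-- telescoping instance 1 : `∑_{N>j} w(M,N)/N = w(M,j)/M` -/
lemma TL1 (m j : ℕ) :
    HasSum (fun i : ℕ => wr m (j + 1 + i) / ((j + 1 + i : ℕ) : ℝ))
      (wr m j / ((m : ℝ) + 1)) := by
  have h := hasSum_telescope (f := fun i => wr m (j + 1 + i) / ((j + 1 + i : ℕ) : ℝ))
    (d := fun i => wr m (j + i) / ((m : ℝ) + 1)) ?_ ?_ ?_ ?_
  · simpa using h
  · intro i
    show wr m (j + 1 + i) / ((j + 1 + i : ℕ) : ℝ)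
        = wr m (j + i) / ((m : ℝ) + 1) - wr m (j + (i + 1)) / ((m : ℝ) + 1)
    have e1 : j + 1 + i = (j + i) + 1 := by omega
    have e2 : j + (i + 1) = (j + i) + 1 := by omega
    rw [e1, e2]
    have := scalar1 m (j + i)
    rw [sub_div] at this
    push_cast at this ⊢
    linarith [this]
  · intro i; exact div_nonneg (wr_nonneg _ _) (by positivity)
  · intro i
    exact div_nonneg (wr_nonneg _ _) (by positivity)
  · have : Tendsto (fun i : ℕ => wr m (j + i)) atTop (𝓝 0) := by
      have h2 : Tendsto (fun i : ℕ => j + i) atTop atTop := by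
        simpa [Nat.add_comm] using tendsto_add_atTop_nat j
      exact (tendsto_wr m).comp h2
    simpa using this.div_const ((m : ℝ) + 1)

/-- telescoping instance 2 : `∑_{M≥j} ε(M,n) = w(j,n)/(n+1)` -/
lemma TL2 (n j : ℕ) :
    HasSum (fun i : ℕ => eps (j + i) n) (wr j n / ((n : ℝ) + 1)) := by
  have h := hasSum_telescope (f := fun i => eps (j + i) n)
    (d := fun i => wr (j + i) n / ((n : ℝ) + 1)) ?_ ?_ ?_ ?_
  · simpa using h
  · intro i
    show eps (j + i) n = wr (j + i) n / ((n : ℝ) + 1) - wr (j + (i + 1)) n / ((n : ℝ) + 1)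
    have e2 : j + (i + 1) = (j + i) + 1 := by omega
    rw [e2, scalar1' (j + i) n, sub_div]
  · intro i; exact eps_nonneg _ _
  · intro i
    exact div_nonneg (wr_nonneg _ _) (by positivity)
  · have : Tendsto (fun i : ℕ => wr (j + i) n) atTop (𝓝 0) := by
      have h2 : Tendsto (fun i : ℕ => j + i) atTop atTop := by
        simpa [Nat.add_comm] using tendsto_add_atTop_nat j
      have h3 : Tendsto (fun k : ℕ => wr k n) atTop (𝓝 0) := by
        have := tendsto_wr n
        simpa [wr_symm n] using this
      exact h3.comp h2
    simpa using this.div_const ((n : ℝ) + 1)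

lemma ofReal_tsum_hasSum {f : ℕ → ℝ} {c : ℝ} (hf : ∀ i, 0 ≤ f i) (h : HasSum f c) :
    ∑' i : ℕ, ENNReal.ofReal (f i) = ENNReal.ofReal c := by
  rw [← ENNReal.ofReal_tsum_of_nonneg hf h.summable, h.tsum_eq]

/-- `a j n = ∑_{M > j} w(M,n)/M` (in shifted coordinates). -/
noncomputable def a (j n : ℕ) : ℝ≥0∞ :=
  ∑' i : ℕ, ENNReal.ofReal (wr (j + i) n / ((j + i + 1 : ℕ) : ℝ))

lemma aR1 (j n : ℕ) :
    a j n = ENNReal.ofReal (wr j n / ((j : ℝ) + 1)) + a (j + 1) n := by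
  unfold a
  rw [tsum_eq_zero_add' ENNReal.summable]
  congr 1
  · norm_num
  · apply tsum_congr
    intro i
    have e : j + (i + 1) = j + 1 + i := by omega
    rw [e]

lemma aR2 (j n : ℕ) :
    a j n = ENNReal.ofReal (wr j n / ((n : ℝ) + 1)) + a j (n + 1) := by
  unfold a
  have hterm : ∀ i : ℕ,
      ENNReal.ofReal (wr (j + i) n / ((j + i + 1 : ℕ) : ℝ))
        = ENNReal.ofReal (eps (j + i) n)
          + ENNReal.ofReal (wr (j + i) (n + 1) / ((j + i + 1 : ℕ) : ℝ)) := by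
    intro i
    rw [← ENNReal.ofReal_add (eps_nonneg _ _) (div_nonneg (wr_nonneg _ _) (by positivity))]
    congr 1
    have h4 := scalar4 (j + i) n
    push_cast at h4 ⊢
    linarith [h4]
  simp only [hterm]
  rw [ENNReal.tsum_add, ofReal_tsum_hasSum (fun i => eps_nonneg _ _) (TL2 n j)]

lemma a_base (n : ℕ) : a 0 n = a n 0 := by
  induction n with
  | zero => rfl
  | succ n ih =>
    have h1 := aR2 0 n
    rw [wr_symm 0 n] at h1
    have h2 := aR1 n 0
    have h3 := ih
    rw [h1, h2] at h3
    exact (ENNReal.add_right_inj ENNReal.ofReal_ne_top).1 h3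

lemma a_symm (j n : ℕ) : a j n = a n j := by
  induction j generalizing n with
  | zero => exact a_base n
  | succ j ih =>
    have h1 := aR1 j n
    have h2 := aR2 n j
    rw [wr_symm n j] at h2
    rw [ih n] at h1
    rw [h2] at h1
    exact (ENNReal.add_right_inj ENNReal.ofReal_ne_top).1 h1.symm

/-! ## tuple machinery -/

abbrev SM (p : ℕ) := {k : Fin p → ℕ+ // StrictMono k}

instance : Unique (SM 0) where
  default := ⟨Fin.elim0, fun x => x.elim0⟩
  uniq := fun t => Subtype.ext (funext fun i => i.elim0)

def toPair (p : ℕ) (k : SM (p + 1)) : SM p × ℕ+ :=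
  (⟨fun i => k.1 i.castSucc, fun i j h => k.2 (Fin.castSucc_lt_castSucc_iff.2 h)⟩,
    k.1 (Fin.last p))

lemma snoc_strictMono {p : ℕ} (t : SM p) (M : ℕ+) (ht : ∀ i, t.1 i < M) :
    StrictMono (Fin.snoc t.1 M : Fin (p + 1) → ℕ+) := by
  rw [Fin.strictMono_iff_lt_succ]
  intro i
  rcases Fin.eq_castSucc_or_eq_last i.succ with ⟨j, hj⟩ | hl
  · rw [hj, Fin.snoc_castSucc, Fin.snoc_castSucc]
    exact t.2 (Fin.castSucc_lt_castSucc_iff.1 (hj ▸ Fin.castSucc_lt_succ (i := i)))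
  · rw [hl, Fin.snoc_castSucc, Fin.snoc_last]
    exact ht i

lemma toPair_injective (p : ℕ) : Function.Injective (toPair p) := by
  intro k k' h
  have h1 : ∀ i : Fin p, k.1 i.castSucc = k'.1 i.castSucc := by
    intro i
    exact congrFun (congrArg Subtype.val (congrArg Prod.fst h)) i
  have h2 : k.1 (Fin.last p) = k'.1 (Fin.last p) := congrArg Prod.snd h
  apply Subtype.ext
  funext x
  rcases Fin.eq_castSucc_or_eq_last x with ⟨j, hj⟩ | hl
  · rw [hj]; exact h1 j
  · rw [hl]; exact h2

lemma toPair_snoc {p : ℕ} (t : SM p) (M : ℕ+) (ht : ∀ i, t.1 i < M) :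
    toPair p ⟨Fin.snoc t.1 M, snoc_strictMono t M ht⟩ = (t, M) := by
  unfold toPair
  refine Prod.ext ?_ ?_
  · exact Subtype.ext (funext fun i => by simp [Fin.snoc_castSucc])
  · simp [Fin.snoc_last]

/-- the master decomposition lemma -/
lemma SIG (p : ℕ) (ph : ℕ+ → ℝ≥0∞) :
    ∑' k : SM (p + 1), (∏ i, ((k.1 i : ℕ) : ℝ≥0∞)⁻¹) * ph (k.1 (Fin.last p))
      = ∑' x : SM p × ℕ+, (if ∀ i, x.1.1 i < x.2 then 1 else 0) *
          (∏ i, ((x.1.1 i : ℕ) : ℝ≥0∞)⁻¹) * ((x.2 : ℕ) : ℝ≥0∞)⁻¹ * ph x.2 := by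
  rw [← Function.Injective.tsum_eq (toPair_injective p) (f := fun x : SM p × ℕ+ =>
      (if ∀ i, x.1.1 i < x.2 then 1 else 0) *
        (∏ i, ((x.1.1 i : ℕ) : ℝ≥0∞)⁻¹) * ((x.2 : ℕ) : ℝ≥0∞)⁻¹ * ph x.2)]
  · apply tsum_congr
    intro k
    have hcond : ∀ i : Fin p, (toPair p k).1.1 i < (toPair p k).2 := by
      intro i
      exact k.2 (Fin.castSucc_lt_last i)
    rw [if_pos hcond, one_mul]
    show (∏ i, ((k.1 i : ℕ) : ℝ≥0∞)⁻¹) * ph (k.1 (Fin.last p)) = _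
    rw [Fin.prod_univ_castSucc (fun i => ((k.1 i : ℕ) : ℝ≥0∞)⁻¹)]
    rfl
  · intro x hx
    rcases Classical.em (∀ i, x.1.1 i < x.2) with hc | hc
    · exact ⟨⟨Fin.snoc x.1.1 x.2, snoc_strictMono x.1 x.2 hc⟩, by
        rw [toPair_snoc x.1 x.2 hc]⟩
    · exfalso
      apply hx
      simp only [Function.mem_support] at *
      rw [if_neg hc]
      simp

noncomputable def W (m n : ℕ) : ℝ≥0∞ := ENNReal.ofReal (wr m n)

noncomputable def B (r N : ℕ) : ℝ≥0∞ :=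
  ∑' t : SM r, if ∀ i, (t.1 i : ℕ) < N then ∏ i, ((t.1 i : ℕ) : ℝ≥0∞)⁻¹ else 0

noncomputable def gg : ℕ → ℕ → ℝ≥0∞
  | 0, n => if n = 0 then 1 else 0
  | (r+1), n => if n = 0 then 0 else B r n * (n : ℝ≥0∞)⁻¹

lemma gg_succ (r n : ℕ) : gg (r + 1) n = if n = 0 then 0 else B r n * (n : ℝ≥0∞)⁻¹ := rfl

lemma gg_zero_fn (n : ℕ) : gg 0 n = if n = 0 then 1 else 0 := rfl

lemma B_zero (N : ℕ) : B 0 N = 1 := by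
  unfold B
  rw [tsum_eq_single (default : SM 0) (fun t ht => absurd (Subsingleton.elim t default) ht)]
  rw [if_pos (fun i => i.elim0)]
  simp

lemma pnat_tsum (f : ℕ → ℝ≥0∞) (h0 : f 0 = 0) : ∑' M : ℕ+, f (M : ℕ) = ∑' n : ℕ, f n := by
  apply Function.Injective.tsum_eq (fun a b h => PNat.coe_injective h)
  intro n hn
  rcases Nat.eq_zero_or_pos n with rfl | hpos
  · exact absurd h0 hn
  · exact ⟨⟨n, hpos⟩, rfl⟩

lemma CL1 (p : ℕ) (ph : ℕ+ → ℝ≥0∞) :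
    ∑' k : SM (p + 1), (∏ i, ((k.1 i : ℕ) : ℝ≥0∞)⁻¹) * ph (k.1 (Fin.last p))
      = ∑' M : ℕ+, B p (M : ℕ) * ((M : ℕ) : ℝ≥0∞)⁻¹ * ph M := by
  rw [SIG, ENNReal.tsum_prod', ENNReal.tsum_comm]
  apply tsum_congr; intro M
  have hB : B p (M : ℕ) * ((M : ℕ) : ℝ≥0∞)⁻¹ * ph M
      = (∑' t : SM p, if ∀ i, (t.1 i : ℕ) < (M : ℕ) then ∏ i, ((t.1 i : ℕ) : ℝ≥0∞)⁻¹ else 0)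
        * (((M : ℕ) : ℝ≥0∞)⁻¹ * ph M) := by
    rw [B]; ring
  rw [hB, ← ENNReal.tsum_mul_right]
  apply tsum_congr; intro t
  have hiff : (∀ i, (t.1 i : ℕ) < (M : ℕ)) ↔ (∀ i, t.1 i < M) :=
    forall_congr' fun i => PNat.coe_lt_coe _ _
  by_cases hc : ∀ i, t.1 i < M
  · rw [if_pos hc, if_pos (hiff.2 hc), one_mul]; ring
  · rw [if_neg hc, if_neg (fun h => hc (hiff.1 h))]; simp

lemma CL2 (p N : ℕ) :
    B (p + 1) N = ∑' n : ℕ, if n < N then gg (p + 1) n else 0 := by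
  have key : B (p + 1) N
      = ∑' k : SM (p + 1), (∏ i, ((k.1 i : ℕ) : ℝ≥0∞)⁻¹)
          * (if ((k.1 (Fin.last p) : ℕ)) < N then 1 else 0) := by
    rw [B]
    apply tsum_congr; intro k
    have hiff : (∀ i, (k.1 i : ℕ) < N) ↔ ((k.1 (Fin.last p) : ℕ) < N) := by
      constructor
      · exact fun h => h _
      · intro h i
        have : k.1 i ≤ k.1 (Fin.last p) := k.2.monotone (Fin.le_last i)
        exact lt_of_le_of_lt (by exact_mod_cast this) h
    by_cases hc : (k.1 (Fin.last p) : ℕ) < N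
    · rw [if_pos (hiff.2 hc), if_pos hc, mul_one]
    · rw [if_neg (fun h => hc (hiff.1 h)), if_neg hc, mul_zero]
  rw [key, CL1 p (fun M => if ((M : ℕ)) < N then 1 else 0)]
  rw [← pnat_tsum (fun n => if n < N then gg (p + 1) n else 0) (by simp [gg])]
  apply tsum_congr; intro M
  have hM : (M : ℕ) ≠ 0 := M.pos.ne'
  by_cases hc : (M : ℕ) < N
  · rw [if_pos hc, if_pos hc, mul_one]
    show _ = gg (p + 1) (M : ℕ)
    rw [show gg (p + 1) (M : ℕ) = B p (M : ℕ) * (((M : ℕ)) : ℝ≥0∞)⁻¹ from by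
      rw [gg_succ, if_neg hM]]
  · rw [if_neg hc, if_neg hc, mul_zero]

lemma B_exp (r N : ℕ) (hN : N ≠ 0) :
    B r N = ∑' j : ℕ, if j < N then gg r j else 0 := by
  cases r with
  | zero =>
    rw [B_zero]
    rw [tsum_eq_single 0 (fun j hj => by simp [gg, hj])]
    rw [if_pos (Nat.pos_of_ne_zero hN)]
    simp [gg]
  | succ r => exact CL2 r N

lemma conv (c : ℕ) (hc : 0 < c) (x : ℝ) :
    ((c : ℝ≥0∞))⁻¹ * ENNReal.ofReal x = ENNReal.ofReal (x / (c : ℝ)) := by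
  rw [ENNReal.ofReal_div_of_pos (by exact_mod_cast hc), div_eq_mul_inv,
    ENNReal.ofReal_natCast, mul_comm]

lemma wr_zero (m : ℕ) : wr m 0 = 1 / ((m : ℝ) + 1) := by
  unfold wr
  rw [Nat.factorial_succ]
  have h1 : (m ! : ℝ) ≠ 0 := by positivity
  push_cast
  field_simp
  ring

lemma W_zero (m : ℕ) : W m 0 = (((m + 1 : ℕ)) : ℝ≥0∞)⁻¹ := by
  rw [W, wr_zero, one_div,
    show ((m : ℝ) + 1) = ((m + 1 : ℕ) : ℝ) from by push_cast; ring,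
    ENNReal.ofReal_inv_of_pos (by positivity), ENNReal.ofReal_natCast]

/-- the key identity `(1/M)^(r+1) = ∑_n g_r(n) w(M,n)` -/
lemma star (r : ℕ) (m : ℕ) :
    (((m + 1 : ℕ) : ℝ≥0∞))⁻¹ ^ (r + 1) = ∑' n : ℕ, gg r n * W m n := by
  induction r generalizing m with
  | zero =>
    rw [tsum_eq_single 0 (fun n hn => by rw [gg_zero_fn, if_neg hn, zero_mul])]
    rw [gg_zero_fn, if_pos rfl, one_mul, pow_one, W_zero]
  | succ r ih =>
    have inner1 : ∀ n : ℕ, gg (r + 1) n * W m n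
        = ∑' j : ℕ, if j < n then gg r j * (((n : ℝ≥0∞))⁻¹ * W m n) else 0 := by
      intro n
      cases n with
      | zero => simp [gg_succ]
      | succ n =>
        rw [gg_succ, if_neg (Nat.succ_ne_zero n), B_exp r (n + 1) (Nat.succ_ne_zero n)]
        rw [mul_assoc, ← ENNReal.tsum_mul_right]
        apply tsum_congr; intro j
        rw [ite_mul, zero_mul]
    have inner2 : ∀ j : ℕ, (∑' n : ℕ, if j < n then gg r j * (((n : ℝ≥0∞))⁻¹ * W m n) else 0)
        = gg r j * (W m j * (((m + 1 : ℕ)) : ℝ≥0∞)⁻¹) := by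
      intro j
      have h1 : ∀ n : ℕ, (if j < n then gg r j * (((n : ℝ≥0∞))⁻¹ * W m n) else 0)
          = gg r j * (if j < n then ((n : ℝ≥0∞))⁻¹ * W m n else 0) := by
        intro n; by_cases hc : j < n <;> simp [hc]
      simp only [h1]
      rw [ENNReal.tsum_mul_left]
      congr 1
      have hre : ∑' n : ℕ, (if j < n then ((n : ℝ≥0∞))⁻¹ * W m n else 0)
          = ∑' i : ℕ, (((j + 1 + i : ℕ) : ℝ≥0∞))⁻¹ * W m (j + 1 + i) := by
        rw [← Function.Injective.tsum_eq (g := fun i : ℕ => j + 1 + i)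
          (fun a b h => by simpa using h)]
        · apply tsum_congr; intro i
          beta_reduce
          rw [if_pos (by omega)]
        · intro n hn
          rcases Nat.lt_or_ge j n with h | h
          · exact ⟨n - j - 1, by beta_reduce; omega⟩
          · exact absurd (by simp [Nat.not_lt.2 h]) hn
      rw [hre]
      have hterm : ∀ i : ℕ, (((j + 1 + i : ℕ) : ℝ≥0∞))⁻¹ * W m (j + 1 + i)
          = ENNReal.ofReal (wr m (j + 1 + i) / ((j + 1 + i : ℕ) : ℝ)) := by
        intro i
        rw [W, conv (j + 1 + i) (by omega)]
      simp only [hterm]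
      rw [ofReal_tsum_hasSum (fun i => div_nonneg (wr_nonneg _ _) (by positivity)) (TL1 m j)]
      rw [show ((m : ℝ) + 1) = ((m + 1 : ℕ) : ℝ) from by push_cast; ring,
        ← conv (m + 1) (by omega), W, mul_comm]
    calc (((m + 1 : ℕ) : ℝ≥0∞))⁻¹ ^ (r + 2)
        = (((m + 1 : ℕ) : ℝ≥0∞))⁻¹ ^ (r + 1) * (((m + 1 : ℕ) : ℝ≥0∞))⁻¹ := by
          rw [pow_succ]
      _ = (∑' n : ℕ, gg r n * W m n) * (((m + 1 : ℕ) : ℝ≥0∞))⁻¹ := by rw [ih]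
      _ = ∑' j : ℕ, gg r j * (W m j * (((m + 1 : ℕ)) : ℝ≥0∞)⁻¹) := by
          rw [← ENNReal.tsum_mul_right]
          apply tsum_congr; intro j; ring
      _ = ∑' j : ℕ, ∑' n : ℕ, if j < n then gg r j * (((n : ℝ≥0∞))⁻¹ * W m n) else 0 := by
          exact tsum_congr fun j => (inner2 j).symm
      _ = ∑' n : ℕ, ∑' j : ℕ, if j < n then gg r j * (((n : ℝ≥0∞))⁻¹ * W m n) else 0 :=
          ENNReal.tsum_comm
      _ = ∑' n : ℕ, gg (r + 1) n * W m n := tsum_congr fun n => (inner1 n).symm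

noncomputable def TT (P e : ℕ) : ℝ≥0∞ :=
  ∑' m : ℕ, B P (m + 1) * (((m + 1 : ℕ)) : ℝ≥0∞)⁻¹ ^ e

noncomputable def UU (P Q : ℕ) : ℝ≥0∞ :=
  ∑' n : ℕ, ∑' j : ℕ, gg P j * gg Q n * a j n

lemma a_eq (j n : ℕ) :
    ∑' i : ℕ, (((j + i + 1 : ℕ)) : ℝ≥0∞)⁻¹ * W (j + i) n = a j n := by
  unfold a
  apply tsum_congr; intro i
  rw [W, conv (j + i + 1) (by omega)]

lemma shift_tsum (f : ℕ → ℝ≥0∞) (h0 : f 0 = 0) :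
    ∑' M : ℕ+, f (M : ℕ) = ∑' m : ℕ, f (m + 1) := by
  rw [pnat_tsum f h0]
  rw [← Function.Injective.tsum_eq (g := fun m : ℕ => m + 1) (fun a b h => by simpa using h)]
  intro n hn
  rcases Nat.eq_zero_or_pos n with rfl | hpos
  · exact absurd h0 hn
  · exact ⟨n - 1, by beta_reduce; omega⟩

lemma series_eq (P e : ℕ) :
    ∑' k : SM (P + 1), (∏ i, ((k.1 i : ℕ) : ℝ≥0∞)⁻¹) *
        (((k.1 (Fin.last P) : ℕ) : ℝ≥0∞)⁻¹ ^ e)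
      = TT P (e + 1) := by
  rw [CL1 P (fun M => (((M : ℕ)) : ℝ≥0∞)⁻¹ ^ e)]
  have h1 : ∀ M : ℕ+, B P (M : ℕ) * (((M : ℕ)) : ℝ≥0∞)⁻¹ * (((M : ℕ)) : ℝ≥0∞)⁻¹ ^ e
      = (fun n : ℕ => if n = 0 then 0 else B P n * ((n : ℝ≥0∞))⁻¹ ^ (e + 1)) (M : ℕ) := by
    intro M
    beta_reduce
    rw [if_neg M.pos.ne', pow_succ]
    ring
  rw [tsum_congr h1, shift_tsum (fun n : ℕ => if n = 0 then 0 else B P n * ((n : ℝ≥0∞))⁻¹ ^ (e + 1)) (by simp)]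
  unfold TT
  apply tsum_congr; intro m
  beta_reduce
  rw [if_neg (Nat.succ_ne_zero m)]

lemma chain (P Q : ℕ) : TT P (Q + 2) = UU P Q := by
  have step1 : ∀ m : ℕ, B P (m + 1) * (((m + 1 : ℕ)) : ℝ≥0∞)⁻¹ ^ (Q + 2)
      = ∑' n : ℕ, gg (P + 1) (m + 1) * (gg Q n * W m n) := by
    intro m
    calc B P (m + 1) * (((m + 1 : ℕ)) : ℝ≥0∞)⁻¹ ^ (Q + 2)
        = (B P (m + 1) * (((m + 1 : ℕ)) : ℝ≥0∞)⁻¹) * (((m + 1 : ℕ)) : ℝ≥0∞)⁻¹ ^ (Q + 1) := by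
          ring
      _ = gg (P + 1) (m + 1) * ∑' n : ℕ, gg Q n * W m n := by
          rw [gg_succ, if_neg (Nat.succ_ne_zero m), ← star Q m]
      _ = ∑' n : ℕ, gg (P + 1) (m + 1) * (gg Q n * W m n) := (ENNReal.tsum_mul_left).symm
  unfold TT
  rw [tsum_congr step1, ENNReal.tsum_comm]
  unfold UU
  apply tsum_congr; intro n
  have expand : ∀ m : ℕ, gg (P + 1) (m + 1) * (gg Q n * W m n)
      = ∑' j : ℕ, (if j < m + 1 then
          (gg P j * gg Q n) * ((((m + 1 : ℕ)) : ℝ≥0∞)⁻¹ * W m n) else 0) := by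
    intro m
    rw [gg_succ, if_neg (Nat.succ_ne_zero m), B_exp P (m + 1) (Nat.succ_ne_zero m)]
    rw [show (∑' j : ℕ, if j < m + 1 then gg P j else 0) * (((m + 1 : ℕ)) : ℝ≥0∞)⁻¹
          * (gg Q n * W m n)
        = (∑' j : ℕ, if j < m + 1 then gg P j else 0)
          * (gg Q n * ((((m + 1 : ℕ)) : ℝ≥0∞)⁻¹ * W m n)) from by ring,
      ← ENNReal.tsum_mul_right]
    apply tsum_congr; intro j
    rw [ite_mul, zero_mul]
    by_cases hc : j < m + 1
    · rw [if_pos hc, if_pos hc]; ring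
    · rw [if_neg hc, if_neg hc]
  rw [tsum_congr expand, ENNReal.tsum_comm]
  apply tsum_congr; intro j
  rw [← Function.Injective.tsum_eq (g := fun i : ℕ => j + i) (fun a b h => by simpa using h)
    (f := fun m : ℕ => if j < m + 1 then
      (gg P j * gg Q n) * ((((m + 1 : ℕ)) : ℝ≥0∞)⁻¹ * W m n) else 0)]
  · calc ∑' i : ℕ, (if j < (j + i) + 1 then
          (gg P j * gg Q n) * ((((j + i + 1 : ℕ)) : ℝ≥0∞)⁻¹ * W (j + i) n) else 0)
        = ∑' i : ℕ, (gg P j * gg Q n) * ((((j + i + 1 : ℕ)) : ℝ≥0∞)⁻¹ * W (j + i) n) := by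
          apply tsum_congr; intro i
          rw [if_pos (by omega)]
      _ = (gg P j * gg Q n) * ∑' i : ℕ, (((j + i + 1 : ℕ)) : ℝ≥0∞)⁻¹ * W (j + i) n :=
          ENNReal.tsum_mul_left
      _ = gg P j * gg Q n * a j n := by rw [a_eq]
  · intro mval hm
    rcases Nat.lt_or_ge mval j with h | h
    · simp only [Function.mem_support] at hm
      exact absurd (if_neg (by omega : ¬ j < mval + 1)) hm
    · exact ⟨mval - j, by beta_reduce; omega⟩

lemma UU_symm (P Q : ℕ) : UU P Q = UU Q P := by
  unfold UU
  calc ∑' n : ℕ, ∑' j : ℕ, gg P j * gg Q n * a j n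
      = ∑' n : ℕ, ∑' j : ℕ, gg P j * gg Q n * a n j := by
        apply tsum_congr; intro n; apply tsum_congr; intro j
        rw [a_symm j n]
    _ = ∑' j : ℕ, ∑' n : ℕ, gg P j * gg Q n * a n j := ENNReal.tsum_comm
    _ = ∑' n : ℕ, ∑' j : ℕ, gg Q j * gg P n * a j n := by
        apply tsum_congr; intro n; apply tsum_congr; intro j
        ring

lemma prod_inv_ne_top {A : ℕ} (k : SM A) :
    (∏ i, ((k.1 i : ℕ) : ℝ≥0∞)⁻¹) ≠ ⊤ := by
  refine (ENNReal.prod_lt_top ?_).ne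
  intro i _
  exact ENNReal.inv_lt_top.2 (by exact_mod_cast (k.1 i).pos)

lemma key_eval (A E : ℕ) :
    ∑' k : {k : Fin (A + 1) → ℕ+ // StrictMono k},
        (∏ i, (1 : ℝ) / ((k.1 i : ℕ) : ℝ)) *
          (1 / ((k.1 ⟨A + 1 - 1, by omega⟩ : ℕ) : ℝ) ^ (E + 1))
      = (TT A (E + 2)).toReal := by
  have hl : (⟨A + 1 - 1, by omega⟩ : Fin (A + 1)) = Fin.last A := rfl
  have hpt : ∀ k : SM (A + 1),
      (∏ i, (1 : ℝ) / ((k.1 i : ℕ) : ℝ)) *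
          (1 / ((k.1 ⟨A + 1 - 1, by omega⟩ : ℕ) : ℝ) ^ (E + 1))
      = ((∏ i, ((k.1 i : ℕ) : ℝ≥0∞)⁻¹) *
          (((k.1 (Fin.last A) : ℕ) : ℝ≥0∞)⁻¹ ^ (E + 1))).toReal := by
    intro k
    rw [hl, ENNReal.toReal_mul, ENNReal.toReal_prod]
    simp [ENNReal.toReal_pow, ENNReal.toReal_inv, one_div, inv_pow]
  have hfin : ∀ k : SM (A + 1),
      (∏ i, ((k.1 i : ℕ) : ℝ≥0∞)⁻¹) *
          (((k.1 (Fin.last A) : ℕ) : ℝ≥0∞)⁻¹ ^ (E + 1)) ≠ ⊤ := by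
    intro k
    apply ENNReal.mul_ne_top (prod_inv_ne_top k)
    exact ENNReal.pow_ne_top (ENNReal.inv_ne_top.2 (by exact_mod_cast (k.1 (Fin.last A)).pos.ne'))
  calc ∑' k : SM (A + 1),
        (∏ i, (1 : ℝ) / ((k.1 i : ℕ) : ℝ)) *
          (1 / ((k.1 ⟨A + 1 - 1, by omega⟩ : ℕ) : ℝ) ^ (E + 1))
      = ∑' k : SM (A + 1), ((∏ i, ((k.1 i : ℕ) : ℝ≥0∞)⁻¹) *
          (((k.1 (Fin.last A) : ℕ) : ℝ≥0∞)⁻¹ ^ (E + 1))).toReal := tsum_congr hpt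
    _ = (∑' k : SM (A + 1), (∏ i, ((k.1 i : ℕ) : ℝ≥0∞)⁻¹) *
          (((k.1 (Fin.last A) : ℕ) : ℝ≥0∞)⁻¹ ^ (E + 1))).toReal :=
        (ENNReal.tsum_toReal_eq hfin).symm
    _ = (TT A (E + 2)).toReal := by rw [series_eq A (E + 1)]

end DD

/-- Drinfel'd duality in series form:
`∑_{1 ≤ k_1 < ⋯ < k_p} (k_1 ⋯ k_p)^{-1} k_p^{-q} = ∑_{1 ≤ ℓ_1 < ⋯ < ℓ_q} (ℓ_1 ⋯ ℓ_q)^{-1} ℓ_q^{-p}`. -/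
theorem drinfeld_duality_series (p q : ℕ) (hp : 0 < p) (hq : 0 < q) :
    ∑' k : {k : Fin p → ℕ+ // StrictMono k},
      (∏ i, (1 : ℝ) / ((k.1 i : ℕ) : ℝ)) *
        (1 / ((k.1 ⟨p - 1, by omega⟩ : ℕ) : ℝ) ^ q) =
    ∑' l : {l : Fin q → ℕ+ // StrictMono l},
      (∏ i, (1 : ℝ) / ((l.1 i : ℕ) : ℝ)) *
        (1 / ((l.1 ⟨q - 1, by omega⟩ : ℕ) : ℝ) ^ p) := by
  obtain ⟨P, rfl⟩ : ∃ P, p = P + 1 := ⟨p - 1, by omega⟩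
  obtain ⟨Q, rfl⟩ : ∃ Q, q = Q + 1 := ⟨q - 1, by omega⟩
  calc ∑' k : {k : Fin (P + 1) → ℕ+ // StrictMono k},
        (∏ i, (1 : ℝ) / ((k.1 i : ℕ) : ℝ)) *
          (1 / ((k.1 ⟨P + 1 - 1, by omega⟩ : ℕ) : ℝ) ^ (Q + 1))
      = (DD.TT P (Q + 2)).toReal := DD.key_eval P Q
    _ = (DD.TT Q (P + 2)).toReal := by
        rw [DD.chain P Q, DD.UU_symm P Q, ← DD.chain Q P]
    _ = _ := (DD.key_eval Q P).symm
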